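/- Let Γ ⊂ ℝ² be a full-rank lattice such that p₂(x,y) = y is injective on Γ and p₂(Γ) is dense in ℝ. Let φ : ℝ → ℂ be a Schwartz function, not identically zero, and let Γ₀ = {(x,y) ∈ Γ : φ̂(y) ≠ 0} where φ̂ is the Fourier transform of φ. If Γ₀ is contained in a finite union of straight lines in ℝ², then the closure of p₂(Γ₀) equals supp(φ̂), yielding a contradiction when supp(φ̂) is not a discrete closed set; consequently, if supp(φ̂) contains an interval, then Γ₀ is not contained in any finite union of straight lines. -/

import Mathlib

open FourierTransform

lemma arith_aux (c d : ℝ) (hd : d ≠ 0) :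
    IsClosed {x : ℝ | ∃ k : ℤ, x = c + k * d} ∧
      Set.Countable {x : ℝ | ∃ k : ℤ, x = c + k * d} := by
  constructor
  · have hset : {x : ℝ | ∃ k : ℤ, x = c + k * d}
        = (fun x : ℝ => (x - c) / d) ⁻¹' (Set.range ((↑) : ℤ → ℝ)) := by
      ext x
      simp only [Set.mem_setOf_eq, Set.mem_preimage, Set.mem_range]
      constructor
      · rintro ⟨k, rfl⟩; exact ⟨k, by field_simp; ring⟩
      · rintro ⟨k, hk⟩
        refine ⟨k, ?_⟩
        field_simp at hk
        linarith
    rw [hset]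
    exact IsClosed.preimage (by fun_prop) Int.isClosedEmbedding_coe_real.isClosed_range
  · have : {x : ℝ | ∃ k : ℤ, x = c + k * d} = Set.range (fun k : ℤ => c + k * d) := by
      ext x; simp [Set.mem_range, eq_comm]
    rw [this]
    exact Set.countable_range _

lemma line_aux (T : (ℝ × ℝ) ≃ₗ[ℝ] (ℝ × ℝ))
    (Γ : Set (ℝ × ℝ)) (hΓ : Γ = {p | ∃ m n : ℤ, p = T (m, n)})
    (h2 : Set.InjOn Prod.snd Γ) (q v : ℝ × ℝ) :
    ∃ A : Set ℝ, IsClosed A ∧ A.Countable ∧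
      Prod.snd '' (Γ ∩ {p : ℝ × ℝ | ∃ t : ℝ, p = q + t • v}) ⊆ A := by
  set L : Set (ℝ × ℝ) := {p : ℝ × ℝ | ∃ t : ℝ, p = q + t • v} with hL
  by_cases hsub : (Γ ∩ L).Subsingleton
  · have hfin : (Prod.snd '' (Γ ∩ L)).Finite := ((hsub.image _).finite)
    exact ⟨_, hfin.isClosed, hfin.countable, subset_rfl⟩
  · rw [Set.not_subsingleton_iff] at hsub
    obtain ⟨p, hpmem, p', hp'mem, hne⟩ := hsub
    obtain ⟨hpΓ, t, hpt⟩ := hpmem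
    obtain ⟨hp'Γ, t', hpt'⟩ := hp'mem
    obtain ⟨m, n, hp⟩ : ∃ m n : ℤ, p = T (m, n) := by rw [hΓ] at hpΓ; exact hpΓ
    obtain ⟨m', n', hp'⟩ : ∃ m n : ℤ, p' = T (m, n) := by rw [hΓ] at hp'Γ; exact hp'Γ
    have ht't : t' - t ≠ 0 := by
      intro h
      apply hne
      rw [hpt, hpt', sub_eq_zero.mp h]
    have hD : p'.2 - p.2 ≠ 0 := by
      intro h
      exact hne (h2 hpΓ hp'Γ (by linarith))
    -- key structural fact
    have key : ∀ p'' ∈ Γ ∩ L, ∃ s : ℝ,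
        (∃ k : ℤ, s * ((m' : ℝ) - m) = k) ∧ (∃ k : ℤ, s * ((n' : ℝ) - n) = k) ∧
        p''.2 = p.2 + s * (p'.2 - p.2) := by
      rintro p'' ⟨hp''Γ, t'', hpt''⟩
      obtain ⟨m'', n'', hp''⟩ : ∃ m n : ℤ, p'' = T (m, n) := by rw [hΓ] at hp''Γ; exact hp''Γ
      set s : ℝ := (t'' - t) / (t' - t) with hs
      have e1 : q + t'' • v - (q + t • v) = (t'' - t) • v := by rw [sub_smul]; abel
      have e2 : q + t' • v - (q + t • v) = (t' - t) • v := by rw [sub_smul]; abel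
      have h1 : p'' - p = s • (p' - p) := by
        rw [hpt'', hpt, hpt', e1, e2, smul_smul, div_mul_cancel₀ _ ht't]
      have h2' : T.symm (p'' - p) = s • T.symm (p' - p) := by rw [h1, map_smul]
      rw [hp'', hp, hp', ← map_sub, ← map_sub, T.symm_apply_apply, T.symm_apply_apply] at h2'
      have hfst : (m'' : ℝ) - m = s * ((m' : ℝ) - m) := congrArg Prod.fst h2'
      have hsnd : (n'' : ℝ) - n = s * ((n' : ℝ) - n) := congrArg Prod.snd h2'
      have hval : p''.2 = p.2 + s * (p'.2 - p.2) := by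
        have := congrArg Prod.snd h1
        simp only [Prod.snd_sub, Prod.smul_snd, smul_eq_mul] at this
        linarith
      exact ⟨s, ⟨m'' - m, by push_cast; linarith⟩, ⟨n'' - n, by push_cast; linarith⟩, hval⟩
    have main : ∀ c : ℝ, c ≠ 0 →
        (∀ p'' ∈ Γ ∩ L, ∃ s : ℝ, (∃ k : ℤ, s * c = k) ∧ p''.2 = p.2 + s * (p'.2 - p.2)) →
        ∃ A : Set ℝ, IsClosed A ∧ A.Countable ∧ Prod.snd '' (Γ ∩ L) ⊆ A := by
      intro c hc hkey
      obtain ⟨hcl, hct⟩ := arith_aux p.2 ((p'.2 - p.2) / c) (div_ne_zero hD hc)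
      refine ⟨_, hcl, hct, ?_⟩
      rintro x ⟨p'', hmem, rfl⟩
      obtain ⟨s, ⟨k, hk⟩, hval⟩ := hkey p'' hmem
      refine ⟨k, ?_⟩
      have hsval : s = k / c := by field_simp; linarith
      rw [hval, hsval]; ring
    have hab : ((m' : ℝ) - m ≠ 0) ∨ ((n' : ℝ) - n ≠ 0) := by
      by_contra h
      push_neg at h
      apply hne
      rw [hp, hp']
      congr 1
      have h1 : (m' : ℝ) = m := by linarith [h.1]
      have h2 : (n' : ℝ) = n := by linarith [h.2]
      rw [h1, h2]
    rcases hab with ha | hb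
    · exact main _ ha fun p'' h => (key p'' h).elim fun s hs => ⟨s, hs.1, hs.2.2⟩
    · exact main _ hb fun p'' h => (key p'' h).elim fun s hs => ⟨s, hs.2.1, hs.2.2⟩

/-- Let `Γ ⊂ ℝ²` be a full-rank lattice with `p₂` injective on `Γ` and
`p₂(Γ)` dense in ℝ. Let `φ` be a nonzero Schwartz function and
`Γ₀ = {(x,y) ∈ Γ : φ̂(y) ≠ 0}`. If `Γ₀` is contained in a finite union of straight lines
then the closure of `p₂(Γ₀)` equals `supp(φ̂)`; consequently, if `supp(φ̂)` contains an
open interval, `Γ₀` is not contained in any finite union of straight lines. -/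
theorem stmt6 (T : (ℝ × ℝ) ≃ₗ[ℝ] (ℝ × ℝ))
    (Γ : Set (ℝ × ℝ)) (hΓ : Γ = {p | ∃ m n : ℤ, p = T (m, n)})
    (h2 : Set.InjOn Prod.snd Γ) (hdense : Dense (Prod.snd '' Γ))
    (φ : SchwartzMap ℝ ℂ) (hφ : ∃ x, φ x ≠ 0)
    (Γ₀ : Set (ℝ × ℝ)) (hΓ₀ : Γ₀ = {p ∈ Γ | 𝓕 (⇑φ) p.2 ≠ 0}) :
    (∀ (N : ℕ) (q v : Fin N → ℝ × ℝ), (∀ i, v i ≠ 0) →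
        Γ₀ ⊆ ⋃ i, {p : ℝ × ℝ | ∃ t : ℝ, p = q i + t • v i} →
        closure (Prod.snd '' Γ₀) = tsupport (𝓕 (⇑φ))) ∧
    ((∃ a b : ℝ, a < b ∧ Set.Ioo a b ⊆ tsupport (𝓕 (⇑φ))) →
      ¬ ∃ (N : ℕ) (q v : Fin N → ℝ × ℝ), (∀ i, v i ≠ 0) ∧
          Γ₀ ⊆ ⋃ i, {p : ℝ × ℝ | ∃ t : ℝ, p = q i + t • v i}) := by
  have hcont : Continuous (𝓕 ⇑φ) := (SchwartzMap.fourierTransformCLM ℝ φ).continuous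
  have himg : Prod.snd '' Γ₀ = (Prod.snd '' Γ) ∩ {y | 𝓕 ⇑φ y ≠ 0} := by
    rw [hΓ₀]
    ext y
    constructor
    · rintro ⟨p, ⟨hpΓ, hpφ⟩, rfl⟩; exact ⟨⟨p, hpΓ, rfl⟩, hpφ⟩
    · rintro ⟨⟨p, hpΓ, rfl⟩, hy⟩; exact ⟨p, ⟨hpΓ, hy⟩, rfl⟩
  have hopen : IsOpen {y : ℝ | 𝓕 ⇑φ y ≠ 0} := isOpen_compl_singleton.preimage hcont
  have hmain : closure (Prod.snd '' Γ₀) = tsupport (𝓕 ⇑φ) := by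
    rw [himg, tsupport]
    apply subset_antisymm
    · exact closure_mono fun y hy => hy.2
    · have h1 : {y : ℝ | 𝓕 ⇑φ y ≠ 0} ⊆
          closure ({y : ℝ | 𝓕 ⇑φ y ≠ 0} ∩ (Prod.snd '' Γ)) :=
        hdense.open_subset_closure_inter hopen
      have h2' : Function.support (𝓕 ⇑φ) = {y : ℝ | 𝓕 ⇑φ y ≠ 0} := rfl
      rw [h2']
      calc closure {y : ℝ | 𝓕 ⇑φ y ≠ 0}
          ⊆ closure (closure ({y : ℝ | 𝓕 ⇑φ y ≠ 0} ∩ (Prod.snd '' Γ))) := closure_mono h1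
        _ = closure ({y : ℝ | 𝓕 ⇑φ y ≠ 0} ∩ (Prod.snd '' Γ)) := closure_closure
        _ = closure ((Prod.snd '' Γ) ∩ {y : ℝ | 𝓕 ⇑φ y ≠ 0}) := by rw [Set.inter_comm]
  refine ⟨fun _ _ _ _ _ => hmain, ?_⟩
  rintro ⟨a, b, hab, hIoo⟩ ⟨N, q, v, -, hcover⟩
  choose A hAcl hAct hAsub using fun i => line_aux T Γ hΓ h2 (q i) (v i)
  have hsub2 : Prod.snd '' Γ₀ ⊆ ⋃ i, A i := by
    rintro x ⟨p, hp, rfl⟩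
    have hpΓ : p ∈ Γ := by rw [hΓ₀] at hp; exact hp.1
    obtain ⟨i, hi⟩ : ∃ i, ∃ t : ℝ, p = q i + t • v i := by
      have := hcover hp
      simpa using this
    exact Set.mem_iUnion.2 ⟨i, hAsub i ⟨p, ⟨hpΓ, hi⟩, rfl⟩⟩
  have hclosed : IsClosed (⋃ i, A i) := isClosed_iUnion_of_finite hAcl
  have hIooSub : Set.Ioo a b ⊆ ⋃ i, A i := by
    calc Set.Ioo a b ⊆ tsupport (𝓕 ⇑φ) := hIoo
      _ = closure (Prod.snd '' Γ₀) := hmain.symm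
      _ ⊆ closure (⋃ i, A i) := closure_mono hsub2
      _ = ⋃ i, A i := hclosed.closure_eq
  have hcount : (Set.Ioo a b).Countable :=
    (Set.countable_iUnion hAct).mono hIooSub
  have := hcount.measure_zero (MeasureTheory.volume)
  rw [Real.volume_Ioo] at this
  simp only [ENNReal.ofReal_eq_zero] at this
  linarith
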